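/- Every connected graph that contains no induced copy of the paw (the graph obtained from a triangle by adding a pendant vertex) is either a complete multipartite graph or triangle-free. -/

import Mathlib

/-- The paw: triangle a,b,c plus a pendant vertex d adjacent to a. -/
def paw : SimpleGraph (Fin 4) :=
  SimpleGraph.fromRel (fun a b => (a.val, b.val) ∈ [(0,1),(0,2),(1,2),(0,3)])

/-- A graph is complete multipartite iff there is an equivalence relation
(partition into parts) such that two vertices are adjacent iff inequivalent. -/
def IsCompleteMultipartite {V : Type*} (G : SimpleGraph V) : Prop :=
  ∃ s : Setoid V, ∀ u v, G.Adj u v ↔ ¬ s.r u v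

/-- From a triangle `a b c` and a pendant vertex `d` attached at `a`
(nonadjacent to `b` and `c`), build an induced paw; contradiction. -/
lemma paw_free_aux {V : Type*} {G : SimpleGraph V} (hfree : IsEmpty (paw ↪g G))
    {a b c d : V} (hab : G.Adj a b) (hac : G.Adj a c) (hbc : G.Adj b c)
    (had : G.Adj a d) (hbd : ¬ G.Adj b d) (hcd : ¬ G.Adj c d) : False := by
  have h1 : a ≠ b := hab.ne
  have h2 : a ≠ c := hac.ne
  have h3 : b ≠ c := hbc.ne
  have h4 : a ≠ d := had.ne
  have h5 : b ≠ d := by rintro rfl; exact hcd hbc.symm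
  have h6 : c ≠ d := by rintro rfl; exact hbd hbc
  have hba := hab.symm
  have hca := hac.symm
  have hcb := hbc.symm
  have hda := had.symm
  have hdb : ¬ G.Adj d b := fun h => hbd h.symm
  have hdc : ¬ G.Adj d c := fun h => hcd h.symm
  refine hfree.false ⟨⟨![a,b,c,d], ?_⟩, ?_⟩
  · intro i j hij
    fin_cases i <;> fin_cases j <;> simp_all
  · intro i j
    fin_cases i <;> fin_cases j <;>
      simp_all [paw, SimpleGraph.fromRel_adj] <;> assumption

section
variable {V : Type*} {G : SimpleGraph V} (hfree : IsEmpty (paw ↪g G))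
include hfree

/-- In a paw-free graph, being in a triangle spreads to neighbors. -/
lemma tri_spread {a b c d : V} (hab : G.Adj a b) (hac : G.Adj a c) (hbc : G.Adj b c)
    (hda : G.Adj d a) : ∃ x y, G.Adj d x ∧ G.Adj d y ∧ G.Adj x y := by
  by_cases hdb : G.Adj d b
  · exact ⟨a, b, hda, hdb, hab⟩
  by_cases hdc : G.Adj d c
  · exact ⟨a, c, hda, hdc, hac⟩
  exact absurd (paw_free_aux hfree hab hac hbc hda.symm
    (fun h => hdb h.symm) (fun h => hdc h.symm)) id

/-- Triangle membership propagates along walks. -/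
lemma tri_walk {u v : V} (p : G.Walk u v)
    (h : ∃ x y, G.Adj u x ∧ G.Adj u y ∧ G.Adj x y) :
    ∃ x y, G.Adj v x ∧ G.Adj v y ∧ G.Adj x y := by
  induction p with
  | nil => exact h
  | cons h' q ih =>
    obtain ⟨x, y, h1, h2, h3⟩ := h
    exact ih (tri_spread hfree h1 h2 h3 h'.symm)

/-- Every edge incident to a triangle-vertex lies in a triangle. -/
lemma edge_tri {u w : V} (htri : ∃ x y, G.Adj u x ∧ G.Adj u y ∧ G.Adj x y)
    (huw : G.Adj u w) : ∃ t, G.Adj u t ∧ G.Adj w t := by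
  obtain ⟨a, b, hua, hub, hab⟩ := htri
  by_cases hwa : G.Adj w a
  · exact ⟨a, hua, hwa⟩
  by_cases hwb : G.Adj w b
  · exact ⟨b, hub, hwb⟩
  exact absurd (paw_free_aux hfree hua hub hab huw
    (fun h => hwa h.symm) (fun h => hwb h.symm)) id

/-- Key lemma: if u is in a triangle, uw is an edge, and v is connected to u
but nonadjacent to both u and w, we get a paw. -/
lemma key_aux : ∀ {u v : V} (_ : G.Walk u v) (w : V),
    (∃ x y, G.Adj u x ∧ G.Adj u y ∧ G.Adj x y) →
    G.Adj u w → ¬ G.Adj v u → ¬ G.Adj v w → False := by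
  intro u v p
  induction p with
  | nil => intro w _ huw _ hvw; exact hvw huw
  | @cons u x v h q ih =>
    intro w htri huw hvu hvw
    obtain ⟨t, hut, hwt⟩ := edge_tri hfree htri huw
    have hvt : ¬ G.Adj v t := by
      intro hvt
      exact paw_free_aux hfree hut.symm hwt.symm huw hvt.symm
        (fun h => hvu h.symm) (fun h => hvw h.symm)
    -- x is adjacent to u; it must hit w or t, giving a triangle u-x-s
    have hs : ∃ s, G.Adj x s ∧ G.Adj u s ∧ ¬ G.Adj v s := by
      by_cases hxw : G.Adj x w
      · exact ⟨w, hxw, huw, hvw⟩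
      by_cases hxt : G.Adj x t
      · exact ⟨t, hxt, hut, hvt⟩
      exact absurd (paw_free_aux hfree huw hut hwt h
        (fun h' => hxw h'.symm) (fun h' => hxt h'.symm)) id
    obtain ⟨s, hxs, hus, hvs⟩ := hs
    by_cases hvx : G.Adj v x
    · exact paw_free_aux hfree h.symm hxs hus hvx.symm
        (fun h' => hvu h'.symm) (fun h' => hvs h'.symm)
    · exact ih s ⟨u, s, h.symm, hxs, hus⟩ hxs hvx hvs

end

theorem statement_0 {V : Type*} (G : SimpleGraph V) (hconn : G.Connected)
    (hfree : IsEmpty (paw ↪g G)) :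
    IsCompleteMultipartite G ∨ G.CliqueFree 3 := by
  classical
  by_cases hcf : G.CliqueFree 3
  · exact Or.inr hcf
  left
  rw [SimpleGraph.CliqueFree] at hcf
  push_neg at hcf
  obtain ⟨s, hs⟩ := hcf
  rw [SimpleGraph.is3Clique_iff] at hs
  obtain ⟨a, b, c, hab, hac, hbc, -⟩ := hs
  have htri : ∀ v : V, ∃ x y, G.Adj v x ∧ G.Adj v y ∧ G.Adj x y := by
    intro v
    obtain ⟨p⟩ := hconn.preconnected a v
    exact tri_walk hfree p ⟨b, c, hab, hac, hbc⟩
  refine ⟨⟨fun u v => ¬ G.Adj u v, fun u => G.irrefl, fun h h' => h h'.symm, ?_⟩,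
    fun u v => (not_not.symm : G.Adj u v ↔ ¬ ¬ G.Adj u v)⟩
  intro u v w huv hvw huw
  obtain ⟨p⟩ := hconn.preconnected u v
  exact key_aux hfree p w (htri u) huw (fun h => huv h.symm) hvw
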